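/- Fix 2 ≤ i ≤ k. Suppose that for every point x ∈ Z_{i−1} the order of its (necessarily finite) stabilizer under the T^{i−1}-action divides c^i_{α,l} for all 0 ≤ α ≤ n_i and 1 ≤ l ≤ i−1. Then π_i : X_i → X_{i−1} is a locally trivial fiber bundle with fiber the weighted projective space ℂP^{n_i}_{χ^i}: every point of X_{i−1} has an open neighborhood U together with a homeomorphism π_i^{−1}(U) ≅ U × ℂP^{n_i}_{χ^i} commuting with the projections to U, where ℂP^{n_i}_{χ^i} denotes the orbit space of S^{2n_i+1} under the circle action u·z = (u^{χ^i_0}z_0,…,u^{χ^i_{n_i}}z_{n_i}) with the quotient topology. -/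

import Mathlib

open Topology


noncomputable section

/-- The scalar by which `u ∈ T^i` multiplies the coordinate `z^j_α`:
`u_j^{χ^j_α} · ∏_{l<j} u_l^{c^j_{α,l}}`. -/
def torusScalar (n : ℕ → ℕ) (χ : (i : ℕ) → Fin (n i + 1) → ℕ)
    (c : (i : ℕ) → Fin (n i + 1) → ℕ → ℤ) {i : ℕ} (u : Fin i → Circle)
    (j : Fin i) (α : Fin (n j + 1)) : Circle :=
  u j ^ χ (j : ℕ) α * ∏ l : Fin i, if (l : ℕ) < (j : ℕ) then u l ^ c (j : ℕ) α (l : ℕ) else 1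

/-- The action of `T^i` on the ambient space `∏_{j<i} ℂ^{n_j+1}`. -/
def torusAct (n : ℕ → ℕ) (χ : (i : ℕ) → Fin (n i + 1) → ℕ)
    (c : (i : ℕ) → Fin (n i + 1) → ℕ → ℤ) {i : ℕ} (u : Fin i → Circle)
    (z : (j : Fin i) → Fin (n j + 1) → ℂ) : (j : Fin i) → Fin (n j + 1) → ℂ :=
  fun j α => (torusScalar n χ c u j α : ℂ) * z j α

/-- `Z_i = ∏_{j=1}^{i} S^{2n_j+1}`, the product of the unit spheres. -/
def Zset (n : ℕ → ℕ) (i : ℕ) : Set ((j : Fin i) → Fin (n j + 1) → ℂ) :=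
  {z | ∀ j : Fin i, ∑ α, Complex.normSq (z j α) = 1}

/-- The orbit equivalence relation of the `T^i`-action on `Z_i`. -/
def orbitRel (n : ℕ → ℕ) (χ : (i : ℕ) → Fin (n i + 1) → ℕ)
    (c : (i : ℕ) → Fin (n i + 1) → ℕ → ℤ) (i : ℕ) :
    Zset n i → Zset n i → Prop :=
  fun z z' => ∃ u : Fin i → Circle,
    torusAct n χ c u (z : (j : Fin i) → Fin (n j + 1) → ℂ)
      = (z' : (j : Fin i) → Fin (n j + 1) → ℂ)

/-- `X_i = Z_i / T^i`, with the quotient topology. -/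
abbrev Xsp (n : ℕ → ℕ) (χ : (i : ℕ) → Fin (n i + 1) → ℕ)
    (c : (i : ℕ) → Fin (n i + 1) → ℕ → ℤ) (i : ℕ) : Type :=
  Quot (orbitRel n χ c i)

/-- The projection `Z_{i+1} → Z_i` forgetting the last sphere coordinate. -/
def projZ (n : ℕ → ℕ) (i : ℕ) (z : Zset n (i + 1)) : Zset n i :=
  ⟨fun j α => (z : (j : Fin (i + 1)) → Fin (n j + 1) → ℂ) ⟨j.1, Nat.lt_succ_of_lt j.2⟩ α,
    fun j => z.2 ⟨j.1, Nat.lt_succ_of_lt j.2⟩⟩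

/-- The unit sphere `S^{2d+1} ⊆ ℂ^{d+1}`. -/
def sphereSet (d : ℕ) : Set (Fin (d + 1) → ℂ) :=
  {w | ∑ α, Complex.normSq (w α) = 1}

/-- The orbit relation on `S^{2n_i+1}` of the weighted circle action
`u · z = (u^{χ^i_0} z_0, …, u^{χ^i_{n_i}} z_{n_i})`; its quotient is the weighted
projective space `ℂP^{n_i}_{χ^i}` (here the block index is `m = i - 1`). -/
def wprojRel (n : ℕ → ℕ) (χ : (i : ℕ) → Fin (n i + 1) → ℕ) (m : ℕ) :
    sphereSet (n m) → sphereSet (n m) → Prop :=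
  fun w w' => ∃ u : Circle, ∀ α, ((u ^ χ m α : Circle) : ℂ) * (w : Fin (n m + 1) → ℂ) α
    = (w' : Fin (n m + 1) → ℂ) α


namespace FBaux

open Finset

/-! ### Circle helpers -/

lemma circle_coe_pow (v : Circle) (k : ℕ) : ((v ^ k : Circle) : ℂ) = (v : ℂ) ^ k := by norm_cast
lemma circle_coe_zpow (v : Circle) (k : ℤ) : ((v ^ k : Circle) : ℂ) = (v : ℂ) ^ k := by norm_cast

lemma circle_exp_pow (x : ℝ) (k : ℕ) : Circle.exp x ^ k = Circle.exp (k * x) := by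
  induction k with
  | zero => simp
  | succ k ih =>
    rw [pow_succ, ih, ← Circle.exp_add]
    congr 1
    push_cast
    ring

/-- a chosen `χ`-th root on the circle -/
def circleRoot (χ : ℕ) (w : Circle) : Circle := Circle.exp (Complex.arg (w : ℂ) / χ)

lemma circleRoot_pow {χ : ℕ} (hχ : 0 < χ) (w : Circle) : circleRoot χ w ^ χ = w := by
  rw [circleRoot, circle_exp_pow, mul_div_cancel₀ _ (by exact_mod_cast hχ.ne'), Circle.exp_arg]

/-- the circle has exactly `χ` `χ`-th roots of unity -/
lemma card_circle_roots {χ : ℕ} (hχ : 0 < χ) : Nat.card {v : Circle // v ^ χ = 1} = χ := by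
  have : NeZero χ := ⟨hχ.ne'⟩
  have hcoe : ∀ x : rootsOfUnity χ ℂ, ((x : ℂˣ) : ℂ) ^ χ = 1 := by
    intro x
    have h := (mem_rootsOfUnity χ (x : ℂˣ)).mp x.2
    simpa using congrArg Units.val h
  have habs : ∀ x : rootsOfUnity χ ℂ, ‖((x : ℂˣ) : ℂ)‖ = 1 := by
    intro x
    have h1 : ‖((x : ℂˣ) : ℂ)‖ ^ χ = 1 := by
      rw [← norm_pow, hcoe x, norm_one]
    rcases pow_eq_one_iff_cases.mp h1 with h | h | h
    · omega
    · exact h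
    · nlinarith [norm_nonneg ((x : ℂˣ) : ℂ)]
  have e : {v : Circle // v ^ χ = 1} ≃ (rootsOfUnity χ ℂ) := by
    refine Equiv.mk (fun v => ⟨Circle.toUnits v.1, ?_⟩)
      (fun x => ⟨⟨((x : ℂˣ) : ℂ), by exact mem_sphere_zero_iff_norm.2 (habs x)⟩, ?_⟩) ?_ ?_
    · rw [mem_rootsOfUnity, ← map_pow, v.2, map_one]
    · refine Circle.ext ?_
      exact (circle_coe_pow _ χ).trans (hcoe x)
    · intro v; ext; rfl
    · intro x; ext; rfl
  rw [Nat.card_congr e]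
  exact Complex.card_rootsOfUnity χ

/-! ### The triangular characters -/

variable (χh : ℕ → ℕ) (ch : ℕ → ℕ → ℤ)

/-- generic version of `torusScalar` along a chosen multi-index -/
def sGen {m : ℕ} (u : Fin m → Circle) (j : Fin m) : Circle :=
  u j ^ χh (j : ℕ) * ∏ l : Fin m, if (l : ℕ) < (j : ℕ) then u l ^ ch (j : ℕ) (l : ℕ) else 1

lemma sGen_castSucc {m : ℕ} (u : Fin (m + 1) → Circle) (j : Fin m) :
    sGen χh ch u j.castSucc = sGen χh ch (fun l => u l.castSucc) j := by
  unfold sGen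
  rw [Fin.prod_univ_castSucc
    (f := fun l : Fin (m+1) => if (l : ℕ) < ((j.castSucc : Fin (m+1)) : ℕ)
      then u l ^ ch ((j.castSucc : Fin (m+1)) : ℕ) (l : ℕ) else 1)]
  simp only [Fin.coe_castSucc, Fin.val_last]
  rw [if_neg (by omega : ¬ m < (j : ℕ)), mul_one]

lemma sGen_last {m : ℕ} (u : Fin (m + 1) → Circle) :
    sGen χh ch u (Fin.last m)
      = u (Fin.last m) ^ χh m * ∏ l : Fin m, u l.castSucc ^ ch m (l : ℕ) := by
  unfold sGen
  rw [Fin.prod_univ_castSucc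
    (f := fun l : Fin (m+1) => if (l : ℕ) < ((Fin.last m : Fin (m+1)) : ℕ)
      then u l ^ ch ((Fin.last m : Fin (m+1)) : ℕ) (l : ℕ) else 1)]
  simp only [Fin.coe_castSucc, Fin.val_last]
  rw [if_neg (lt_irrefl m), mul_one]
  congr 1
  refine Finset.prod_congr rfl fun l _ => ?_
  rw [if_pos l.isLt]

/-- cardinality of the joint kernel of the triangular characters -/
lemma card_kernel : ∀ (m : ℕ) (χh : ℕ → ℕ) (ch : ℕ → ℕ → ℤ), (∀ j, j < m → 0 < χh j) →
    Nat.card {u : Fin m → Circle // ∀ j, sGen χh ch u j = 1} = ∏ j ∈ range m, χh j := by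
  intro m
  induction m with
  | zero =>
    intro χh ch _
    have : Unique {u : Fin 0 → Circle // ∀ j, sGen χh ch u j = 1} := by
      refine ⟨⟨⟨fun j => j.elim0, fun j => j.elim0⟩⟩, ?_⟩
      intro x; ext j; exact j.elim0
    simp [Nat.card_unique]
  | succ m ih =>
    intro χh ch hχ
    set g : (Fin m → Circle) → Circle :=
      fun u' => (∏ l : Fin m, u' l ^ ch m (l : ℕ))⁻¹ with hg
    have hroot : ∀ u' : Fin m → Circle, circleRoot (χh m) (g u') ^ χh m = g u' :=
      fun u' => circleRoot_pow (hχ m (Nat.lt_succ_self m)) (g u')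
    have key : ∀ u : Fin (m+1) → Circle,
        (∀ j, sGen χh ch u j = 1) ↔
        ((∀ j : Fin m, sGen χh ch (fun l => u l.castSucc) j = 1) ∧
          u (Fin.last m) ^ χh m = g (fun l => u l.castSucc)) := by
      intro u
      constructor
      · intro h
        refine ⟨fun j => by rw [← sGen_castSucc]; exact h j.castSucc, ?_⟩
        have h2 := h (Fin.last m)
        rw [sGen_last] at h2
        rw [mul_comm] at h2
        exact eq_inv_of_mul_eq_one_right h2
      · rintro ⟨h1, h2⟩ j
        refine Fin.lastCases ?_ (fun j => ?_) j
        · rw [sGen_last, h2]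
          exact inv_mul_cancel _
        · rw [sGen_castSucc]; exact h1 j
    set sn : (Fin m → Circle) → Circle → (Fin (m+1) → Circle) :=
      fun u' v => Fin.snoc u' v with hsn
    have hsnC : ∀ (u' : Fin m → Circle) (v : Circle) (l : Fin m), sn u' v l.castSucc = u' l := by
      intro u' v l; simp [hsn]
    have hsnC' : ∀ (u' : Fin m → Circle) (v : Circle),
        (fun l : Fin m => sn u' v l.castSucc) = u' := by
      intro u' v; funext l; exact hsnC u' v l
    have hsnL : ∀ (u' : Fin m → Circle) (v : Circle), sn u' v (Fin.last m) = v := by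
      intro u' v; simp [hsn]
    have E : {u : Fin (m+1) → Circle // ∀ j, sGen χh ch u j = 1}
        ≃ {u : Fin m → Circle // ∀ j, sGen χh ch u j = 1} × {v : Circle // v ^ χh m = 1} := by
      refine Equiv.mk
        (fun u => ⟨⟨fun l => u.1 l.castSucc, ((key u.1).mp u.2).1⟩,
          ⟨u.1 (Fin.last m) / circleRoot (χh m) (g (fun l => u.1 l.castSucc)), ?_⟩⟩)
        (fun p => ⟨sn p.1.1 (circleRoot (χh m) (g p.1.1) * p.2.1), ?_⟩) ?_ ?_
      · rw [div_pow, ((key u.1).mp u.2).2, hroot, div_self']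
      · rw [key, hsnC']
        refine ⟨p.1.2, ?_⟩
        rw [hsnL, mul_pow, hroot, p.2.2, mul_one]
      · intro u
        apply Subtype.ext
        funext j
        dsimp only
        refine Fin.lastCases ?_ (fun j => ?_) j
        · rw [hsnL, mul_comm, div_mul_cancel]
        · rw [hsnC]
      · intro p
        refine Prod.ext ?_ ?_
        · apply Subtype.ext
          funext l
          dsimp only
          exact hsnC _ _ l
        · apply Subtype.ext
          dsimp only
          show sn p.1.1 _ (Fin.last m) / circleRoot (χh m) (g (fun l => sn p.1.1 _ l.castSucc)) = _
          rw [hsnC', hsnL, mul_comm, mul_div_cancel_right]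
    rw [Nat.card_congr E, Nat.card_prod, ih χh ch (fun j hj => hχ j (Nat.lt_succ_of_lt hj)),
      card_circle_roots (hχ m (Nat.lt_succ_self m)), Finset.prod_range_succ]

/-- a character divisible by the product of the diagonal weights factors through
the triangular characters -/
lemma factor_char (χh : ℕ → ℕ) (ch : ℕ → ℕ → ℤ) : ∀ (m : ℕ) (d : ℕ → ℤ),
    (∀ j, j < m → 0 < χh j) →
    (∀ l, l < m → (∏ j ∈ range m, (χh j : ℤ)) ∣ d l) →
    ∃ b : ℕ → ℤ, ∀ u : Fin m → Circle,
      (∏ l : Fin m, u l ^ d (l : ℕ)) = ∏ j : Fin m, sGen χh ch u j ^ b (j : ℕ) := by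
  intro m
  induction m with
  | zero => exact fun d _ _ => ⟨0, fun u => by simp⟩
  | succ m ih =>
    intro d hχ hdvd
    set P : ℤ := ∏ j ∈ range m, (χh j : ℤ) with hP
    have hPm : (∏ j ∈ range (m+1), (χh j : ℤ)) = P * χh m := by rw [prod_range_succ]
    obtain ⟨t, ht⟩ := hdvd m (Nat.lt_succ_self m)
    set bm : ℤ := P * t with hbm
    have hdm : d m = (χh m : ℤ) * bm := by rw [ht, hPm, hbm]; ring
    set d' : ℕ → ℤ := fun l => d l - bm * ch m l with hd'
    have hdvd' : ∀ l, l < m → P ∣ d' l := by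
      intro l hl
      obtain ⟨s, hs⟩ := hdvd l (Nat.lt_succ_of_lt hl)
      refine ⟨(χh m : ℤ) * s - t * ch m l, ?_⟩
      rw [hd']
      simp only
      rw [hs, hPm, hbm]
      ring
    obtain ⟨b', hb'⟩ := ih d' (fun j hj => hχ j (Nat.lt_succ_of_lt hj)) hdvd'
    refine ⟨fun j => if j = m then bm else b' j, fun u => ?_⟩
    have hb'c := hb' (fun l => u l.castSucc)
    have h1 : ((u (Fin.last m)) ^ χh m) ^ bm = u (Fin.last m) ^ d m := by
      rw [← zpow_natCast (u (Fin.last m)) (χh m), ← zpow_mul, ← hdm]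
    have h2 : (∏ l : Fin m, u l.castSucc ^ ch m (l : ℕ)) ^ bm
        = ∏ l : Fin m, u l.castSucc ^ (ch m (l : ℕ) * bm) := by
      calc (∏ l : Fin m, u l.castSucc ^ ch m (l : ℕ)) ^ bm
          = zpowGroupHom bm (∏ l : Fin m, u l.castSucc ^ ch m (l : ℕ)) := rfl
        _ = ∏ l : Fin m, zpowGroupHom bm (u l.castSucc ^ ch m (l : ℕ)) :=
            map_prod (zpowGroupHom bm) _ univ
        _ = ∏ l : Fin m, u l.castSucc ^ (ch m (l : ℕ) * bm) := by
            refine Finset.prod_congr rfl fun l _ => ?_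
            show (u l.castSucc ^ ch m (l : ℕ)) ^ bm = _
            rw [← zpow_mul]
    have h3 : ∀ l : Fin m, u l.castSucc ^ d' (l : ℕ) * u l.castSucc ^ (ch m (l : ℕ) * bm)
        = u l.castSucc ^ d (l : ℕ) := by
      intro l
      rw [← zpow_add]
      congr 1
      rw [hd']
      simp only
      ring
    calc ∏ l : Fin (m+1), u l ^ d (l : ℕ)
        = (∏ l : Fin m, u l.castSucc ^ d (l : ℕ)) * u (Fin.last m) ^ d m := by
          rw [Fin.prod_univ_castSucc (f := fun l : Fin (m+1) => u l ^ d (l : ℕ))]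
          simp only [Fin.coe_castSucc, Fin.val_last]
      _ = (∏ l : Fin m, u l.castSucc ^ d' (l : ℕ) * u l.castSucc ^ (ch m (l : ℕ) * bm))
            * u (Fin.last m) ^ d m := by
          rw [Finset.prod_congr rfl fun l (_ : l ∈ univ) => h3 l]
      _ = ((∏ l : Fin m, u l.castSucc ^ d' (l : ℕ))
            * (∏ l : Fin m, u l.castSucc ^ ch m (l : ℕ)) ^ bm)
            * ((u (Fin.last m)) ^ χh m) ^ bm := by
          rw [Finset.prod_mul_distrib, h1, h2]
      _ = (∏ j : Fin m, sGen χh ch (fun l => u l.castSucc) j ^ b' (j : ℕ))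
            * (u (Fin.last m) ^ χh m * ∏ l : Fin m, u l.castSucc ^ ch m (l : ℕ)) ^ bm := by
          rw [hb'c, mul_zpow, mul_assoc]
          congr 1
          rw [mul_comm]
      _ = ∏ j : Fin (m+1), sGen χh ch u j ^ (if (j : ℕ) = m then bm else b' (j : ℕ)) := by
          rw [Fin.prod_univ_castSucc
            (f := fun j : Fin (m+1) => sGen χh ch u j ^ (if (j : ℕ) = m then bm else b' (j : ℕ)))]
          simp only [Fin.coe_castSucc, Fin.val_last, eq_self_iff_true, if_true]
          congr 1
          · refine Finset.prod_congr rfl fun j _ => ?_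
            rw [sGen_castSucc, if_neg (by omega : ¬ (j : ℕ) = m)]
          · rw [sGen_last]

end FBaux
open FBaux

/-! ### Topological helpers for the torus action -/

section Torus

variable (n : ℕ → ℕ) (χ : (i : ℕ) → Fin (n i + 1) → ℕ) (c : (i : ℕ) → Fin (n i + 1) → ℕ → ℤ)

lemma torusScalar_mul {i : ℕ} (u v : Fin i → Circle) (j : Fin i) (α : Fin (n j + 1)) :
    torusScalar n χ c (fun l => u l * v l) j α
      = torusScalar n χ c u j α * torusScalar n χ c v j α := by
  unfold torusScalar
  rw [mul_pow, mul_mul_mul_comm]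
  congr 1
  rw [← Finset.prod_mul_distrib]
  refine Finset.prod_congr rfl fun l _ => ?_
  split
  · rw [mul_zpow]
  · rw [mul_one]

lemma torusScalar_one {i : ℕ} (j : Fin i) (α : Fin (n j + 1)) :
    torusScalar n χ c (fun _ => 1) j α = 1 := by
  unfold torusScalar
  simp

lemma torusAct_mul {i : ℕ} (u v : Fin i → Circle) (z : (j : Fin i) → Fin (n j + 1) → ℂ) :
    torusAct n χ c (fun l => u l * v l) z = torusAct n χ c u (torusAct n χ c v z) := by
  funext j α
  unfold torusAct
  rw [torusScalar_mul]
  push_cast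
  ring

lemma torusAct_one {i : ℕ} (z : (j : Fin i) → Fin (n j + 1) → ℂ) :
    torusAct n χ c (fun _ => 1) z = z := by
  funext j α
  unfold torusAct
  rw [torusScalar_one]
  simp

lemma torusAct_inv_cancel {i : ℕ} (u : Fin i → Circle) (z : (j : Fin i) → Fin (n j + 1) → ℂ) :
    torusAct n χ c (fun l => (u l)⁻¹) (torusAct n χ c u z) = z := by
  rw [← torusAct_mul]
  have h : (fun l : Fin i => (u l)⁻¹ * u l) = (fun _ : Fin i => (1 : Circle)) :=
    funext fun l => inv_mul_cancel (u l)
  rw [h, torusAct_one]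

lemma orbit_equivalence (i : ℕ) : Equivalence (orbitRel n χ c i) := by
  constructor
  · intro z
    exact ⟨fun _ => 1, torusAct_one n χ c _⟩
  · rintro z z' ⟨u, hu⟩
    refine ⟨fun l => (u l)⁻¹, ?_⟩
    rw [← hu, torusAct_inv_cancel]
  · rintro z z' z'' ⟨u, hu⟩ ⟨v, hv⟩
    refine ⟨fun l => v l * u l, ?_⟩
    rw [torusAct_mul, hu, hv]

lemma quotZ_eq_iff {i : ℕ} (z z' : Zset n i) :
    Quot.mk (orbitRel n χ c i) z = Quot.mk (orbitRel n χ c i) z' ↔ orbitRel n χ c i z z' := by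
  rw [Quot.eq]
  exact Equivalence.eqvGen_iff (orbit_equivalence n χ c i)

lemma torusAct_mem {i : ℕ} (u : Fin i → Circle) {z : (j : Fin i) → Fin (n j + 1) → ℂ}
    (hz : z ∈ Zset n i) : torusAct n χ c u z ∈ Zset n i := by
  intro j
  rw [← hz j]
  refine Finset.sum_congr rfl fun α _ => ?_
  unfold torusAct
  rw [Complex.normSq_mul, Circle.normSq_coe, one_mul]

/-- the torus action on `Z_i` -/
def actZ {i : ℕ} (u : Fin i → Circle) (z : Zset n i) : Zset n i :=
  ⟨torusAct n χ c u z.1, torusAct_mem n χ c u z.2⟩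

lemma continuous_torusAct {i : ℕ} (u : Fin i → Circle) :
    Continuous (torusAct n χ c (i := i) u) := by
  refine continuous_pi fun j => continuous_pi fun α => ?_
  exact continuous_const.mul ((continuous_apply α).comp (continuous_apply j))

lemma continuous_actZ {i : ℕ} (u : Fin i → Circle) : Continuous (actZ n χ c (i := i) u) :=
  Continuous.subtype_mk ((continuous_torusAct n χ c u).comp continuous_subtype_val) _

lemma isOpenMap_quotZ (i : ℕ) : IsOpenMap (Quot.mk (orbitRel n χ c i)) := by
  intro O hO
  rw [isOpen_coinduced]
  have hset : Quot.mk (orbitRel n χ c i) ⁻¹' (Quot.mk (orbitRel n χ c i) '' O)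
      = ⋃ u : Fin i → Circle, actZ n χ c u ⁻¹' O := by
    ext z
    simp only [Set.mem_preimage, Set.mem_image, Set.mem_iUnion]
    constructor
    · rintro ⟨z', hz', hq⟩
      rw [quotZ_eq_iff] at hq
      obtain ⟨u, hu⟩ := hq
      refine ⟨fun l => (u l)⁻¹, ?_⟩
      have h : actZ n χ c (fun l => (u l)⁻¹) z = z' := by
        apply Subtype.ext
        show torusAct n χ c _ z.1 = z'.1
        rw [← hu, torusAct_inv_cancel]
      rw [h]
      exact hz'
    · rintro ⟨u, hu⟩
      refine ⟨actZ n χ c u z, hu, ?_⟩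
      rw [quotZ_eq_iff]
      refine ⟨fun l => (u l)⁻¹, ?_⟩
      show torusAct n χ c _ (torusAct n χ c u z.1) = z.1
      rw [torusAct_inv_cancel]
  rw [hset]
  exact isOpen_iUnion fun u => (continuous_actZ n χ c u).isOpen_preimage O hO

/-! ### Topological helpers for the weighted circle action on the sphere -/

variable (m : ℕ)

lemma wproj_equivalence : Equivalence (wprojRel n χ m) := by
  constructor
  · intro w
    exact ⟨1, fun α => by rw [one_pow, Circle.coe_one, one_mul]⟩
  · rintro w w' ⟨u, hu⟩
    refine ⟨u⁻¹, fun α => ?_⟩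
    rw [← hu α, inv_pow]
    push_cast
    rw [← mul_assoc, inv_mul_cancel₀ (by exact_mod_cast Circle.coe_ne_zero (u ^ χ m α)), one_mul]
  · rintro w w' w'' ⟨u, hu⟩ ⟨v, hv⟩
    refine ⟨v * u, fun α => ?_⟩
    rw [← hv α, ← hu α, mul_pow]
    push_cast
    ring

lemma quotS_eq_iff (w w' : sphereSet (n m)) :
    Quot.mk (wprojRel n χ m) w = Quot.mk (wprojRel n χ m) w' ↔ wprojRel n χ m w w' := by
  rw [Quot.eq]
  exact Equivalence.eqvGen_iff (wproj_equivalence n χ m)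

lemma sphereAct_mem (v : Circle) {w : Fin (n m + 1) → ℂ} (hw : w ∈ sphereSet (n m)) :
    (fun α => ((v ^ χ m α : Circle) : ℂ) * w α) ∈ sphereSet (n m) := by
  show ∑ α, Complex.normSq _ = 1
  rw [← hw]
  refine Finset.sum_congr rfl fun α _ => ?_
  rw [Complex.normSq_mul, Circle.normSq_coe, one_mul]

/-- the weighted circle action on the sphere -/
def actS (v : Circle) (w : sphereSet (n m)) : sphereSet (n m) :=
  ⟨fun α => ((v ^ χ m α : Circle) : ℂ) * w.1 α, sphereAct_mem n χ m v w.2⟩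

lemma continuous_actS (v : Circle) : Continuous (actS n χ m v) := by
  refine Continuous.subtype_mk (continuous_pi fun α => ?_) _
  exact continuous_const.mul ((continuous_apply α).comp continuous_subtype_val)

lemma isOpenMap_quotS : IsOpenMap (Quot.mk (wprojRel n χ m)) := by
  intro O hO
  rw [isOpen_coinduced]
  have hset : Quot.mk (wprojRel n χ m) ⁻¹' (Quot.mk (wprojRel n χ m) '' O)
      = ⋃ v : Circle, actS n χ m v ⁻¹' O := by
    ext w
    simp only [Set.mem_preimage, Set.mem_image, Set.mem_iUnion]
    constructor
    · rintro ⟨w', hw', hq⟩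
      rw [quotS_eq_iff] at hq
      obtain ⟨v, hv⟩ := hq
      refine ⟨v⁻¹, ?_⟩
      have h : actS n χ m v⁻¹ w = w' := by
        apply Subtype.ext
        funext α
        show ((v⁻¹ ^ χ m α : Circle) : ℂ) * w.1 α = w'.1 α
        rw [← hv α, inv_pow]
        push_cast
        rw [← mul_assoc, inv_mul_cancel₀ (by exact_mod_cast Circle.coe_ne_zero (v ^ χ m α)),
          one_mul]
      rw [h]
      exact hw'
    · rintro ⟨v, hv⟩
      refine ⟨actS n χ m v w, hv, ?_⟩
      rw [quotS_eq_iff]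
      refine ⟨v⁻¹, fun α => ?_⟩
      show ((v⁻¹ ^ χ m α : Circle) : ℂ) * (((v ^ χ m α : Circle) : ℂ) * w.1 α) = w.1 α
      rw [inv_pow]
      push_cast
      rw [← mul_assoc, inv_mul_cancel₀ (by exact_mod_cast Circle.coe_ne_zero (v ^ χ m α)), one_mul]
  rw [hset]
  exact isOpen_iUnion fun v => (continuous_actS n χ m v).isOpen_preimage O hO

end Torus


/-! ### The local trivialization -/

section Triv

variable (n : ℕ → ℕ) (χ : (i : ℕ) → Fin (n i + 1) → ℕ) (c : (i : ℕ) → Fin (n i + 1) → ℕ → ℤ)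
variable (m : ℕ)

lemma torusScalar_castSucc (u : Fin (m + 1) → Circle) (j : Fin m) (α : Fin (n (j : ℕ) + 1)) :
    torusScalar n χ c u j.castSucc α = torusScalar n χ c (fun l => u l.castSucc) j α := by
  unfold torusScalar
  rw [Fin.prod_univ_castSucc
    (f := fun l : Fin (m+1) => if (l : ℕ) < ((j.castSucc : Fin (m+1)) : ℕ)
      then u l ^ c ((j.castSucc : Fin (m+1)) : ℕ) α (l : ℕ) else 1)]
  simp only [Fin.coe_castSucc, Fin.val_last]
  rw [if_neg (by omega : ¬ m < (j : ℕ)), mul_one]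

lemma torusScalar_last (u : Fin (m + 1) → Circle) (α : Fin (n m + 1)) :
    torusScalar n χ c u (Fin.last m) α
      = u (Fin.last m) ^ χ m α * ∏ l : Fin m, u l.castSucc ^ c m α (l : ℕ) := by
  unfold torusScalar
  rw [Fin.prod_univ_castSucc
    (f := fun l : Fin (m+1) => if (l : ℕ) < ((Fin.last m : Fin (m+1)) : ℕ)
      then u l ^ c ((Fin.last m : Fin (m+1)) : ℕ) α (l : ℕ) else 1)]
  simp only [Fin.coe_castSucc, Fin.val_last]
  rw [if_neg (lt_irrefl m), mul_one]
  congr 1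
  refine Finset.prod_congr rfl fun l _ => ?_
  rw [if_pos l.isLt]

/-- unit complex number attached to a nonzero one -/
def unitC (x : ℂ) (hx : x ≠ 0) : Circle :=
  ⟨x / ‖x‖, by
    simp only [Submonoid.unitSphere, Submonoid.mem_mk, Subsemigroup.mem_mk, Set.mem_setOf_eq,
      mem_sphere_zero_iff_norm]
    rw [norm_div, Complex.norm_real, Real.norm_eq_abs, abs_of_nonneg (norm_nonneg x),
      div_self (norm_ne_zero_iff.mpr hx)]⟩

lemma unitC_congr {x y : ℂ} (hx : x ≠ 0) (hy : y ≠ 0) (h : x = y) : unitC x hx = unitC y hy := by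
  subst h; rfl

lemma unitC_smul (s : Circle) (x : ℂ) (hx : x ≠ 0) (h' : (s : ℂ) * x ≠ 0) :
    unitC ((s : ℂ) * x) h' = s * unitC x hx := by
  apply Circle.ext
  show ((s : ℂ) * x) / ‖(s : ℂ) * x‖ = (s : ℂ) * (x / ‖x‖)
  rw [norm_mul]
  have hs : ‖(s : ℂ)‖ = 1 := by
    rw [Circle.norm_coe]
  rw [hs, one_mul, mul_div_assoc]

lemma sphere_mul_mem (s : Fin (n m + 1) → Circle) {w : Fin (n m + 1) → ℂ}
    (hw : w ∈ sphereSet (n m)) : (fun α => ((s α : ℂ)) * w α) ∈ sphereSet (n m) := by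
  show ∑ α, Complex.normSq _ = 1
  rw [← hw]
  refine Finset.sum_congr rfl fun α _ => ?_
  rw [Complex.normSq_mul, Circle.normSq_coe, one_mul]

lemma continuous_projZ : Continuous (projZ n m) := by
  refine Continuous.subtype_mk (continuous_pi fun j => continuous_pi fun α => ?_) _
  exact (continuous_apply α).comp ((continuous_apply _).comp continuous_subtype_val)

/-- glueing a point of `Z_m` with a last sphere coordinate -/
def glue (z : Zset n m) (w : Fin (n m + 1) → ℂ) : (j : Fin (m + 1)) → Fin (n (j : ℕ) + 1) → ℂ :=
  fun j => Fin.lastCases (motive := fun j => Fin (n (j : ℕ) + 1) → ℂ) w (fun j' => z.1 j') j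

lemma glue_last (z : Zset n m) (w : Fin (n m + 1) → ℂ) : glue n m z w (Fin.last m) = w := by
  unfold glue
  rw [Fin.lastCases_last]

lemma glue_castSucc (z : Zset n m) (w : Fin (n m + 1) → ℂ) (j : Fin m) :
    glue n m z w j.castSucc = z.1 j := by
  unfold glue
  rw [Fin.lastCases_castSucc]

lemma glue_mem (z : Zset n m) {w : Fin (n m + 1) → ℂ} (hw : w ∈ sphereSet (n m)) :
    glue n m z w ∈ Zset n (m + 1) := by
  intro j
  refine Fin.lastCases ?_ (fun j' => ?_) j
  · rw [glue_last]
    exact hw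
  · rw [glue_castSucc]
    exact z.2 j'

lemma glue_proj (z : Zset n m) (w : Fin (n m + 1) → ℂ) (h : glue n m z w ∈ Zset n (m + 1)) :
    projZ n m ⟨glue n m z w, h⟩ = z := by
  apply Subtype.ext
  funext j α
  show glue n m z w j.castSucc α = z.1 j α
  rw [glue_castSucc]

lemma trivialization (a : (j : Fin m) → Fin (n (j : ℕ) + 1))
    (b : Fin (n m + 1) → Fin m → ℤ)
    (hb : ∀ (α : Fin (n m + 1)) (u : Fin m → Circle),
      (∏ l : Fin m, u l ^ c m α (l : ℕ)) = ∏ j : Fin m, torusScalar n χ c u j (a j) ^ b α j)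
    (π : Xsp n χ c (m + 1) → Xsp n χ c m)
    (hπ : ∀ z : Zset n (m + 1),
      π (Quot.mk (orbitRel n χ c (m + 1)) z) = Quot.mk (orbitRel n χ c m) (projZ n m z)) :
    ∃ U : Set (Xsp n χ c m), IsOpen U ∧
      (∀ z : Zset n m, (∀ j, z.1 j (a j) ≠ 0) → Quot.mk (orbitRel n χ c m) z ∈ U) ∧
      ∃ φ : (π ⁻¹' U) ≃ₜ U × Quot (wprojRel n χ m),
        ∀ q : π ⁻¹' U, ((φ q).1 : Xsp n χ c m) = π (q : Xsp n χ c (m + 1)) := by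
  classical
  set qm := Quot.mk (orbitRel n χ c m) with hqmdef
  set qZ := Quot.mk (orbitRel n χ c (m + 1)) with hqZdef
  set qS := Quot.mk (wprojRel n χ m) with hqSdef
  set Vs : Set (Zset n m) := {z | ∀ j, z.1 j (a j) ≠ 0} with hVsdef
  have hVsopen : IsOpen Vs := by
    have h : Vs = ⋂ j : Fin m, (fun z : Zset n m => z.1 j (a j)) ⁻¹' {(0 : ℂ)}ᶜ := by
      ext z
      simp [hVsdef, Set.mem_iInter]
    rw [h]
    refine isOpen_iInter_of_finite fun j => ?_
    refine Continuous.isOpen_preimage ?_ _ isOpen_compl_singleton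
    exact (continuous_apply (a j)).comp ((continuous_apply j).comp continuous_subtype_val)
  have hVsinv : ∀ (u : Fin m → Circle) (z : Zset n m), z ∈ Vs → actZ n χ c u z ∈ Vs := by
    intro u z hz j
    show (torusScalar n χ c u j (a j) : ℂ) * z.1 j (a j) ≠ 0
    exact mul_ne_zero (Circle.coe_ne_zero _) (hz j)
  set U : Set (Xsp n χ c m) := qm '' Vs with hUdef
  have hsat : qm ⁻¹' U = Vs := by
    ext z
    simp only [hUdef, Set.mem_preimage, Set.mem_image]
    constructor
    · rintro ⟨z', hz', he⟩
      rw [quotZ_eq_iff] at he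
      obtain ⟨u, hu⟩ := he
      have h : actZ n χ c u z' = z := Subtype.ext hu
      rw [← h]
      exact hVsinv u z' hz'
    · intro h
      exact ⟨z, h, rfl⟩
  have hqmq : IsQuotientMap qm := isQuotientMap_quot_mk
  have hqZq : IsQuotientMap qZ := isQuotientMap_quot_mk
  have hUopen : IsOpen U := hqmq.isOpen_preimage.mp (by rw [hsat]; exact hVsopen)
  have hDeq : ∀ ζ : Zset n (m + 1), (ζ ∈ qZ ⁻¹' (π ⁻¹' U)) ↔ projZ n m ζ ∈ Vs := by
    intro ζ
    have h1 : (ζ ∈ qZ ⁻¹' (π ⁻¹' U)) ↔ qm (projZ n m ζ) ∈ U := by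
      rw [Set.mem_preimage, Set.mem_preimage, hπ ζ]
    rw [h1, ← hsat, Set.mem_preimage]
  have hπUopen : IsOpen (π ⁻¹' U) := by
    refine hqZq.isOpen_preimage.mp ?_
    have h : qZ ⁻¹' (π ⁻¹' U) = projZ n m ⁻¹' Vs := Set.ext hDeq
    rw [h]
    exact (continuous_projZ n m).isOpen_preimage _ hVsopen
  -- the restricted quotient maps
  set q1 : ↥(qm ⁻¹' U) → ↥U := U.restrictPreimage qm with hq1def
  have hq1q : IsQuotientMap q1 := hqmq.restrictPreimage_isOpen hUopen
  have hq1o : IsOpenMap q1 := (isOpenMap_quotZ n χ c m).restrictPreimage U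
  set qV : ↥(qZ ⁻¹' (π ⁻¹' U)) → ↥(π ⁻¹' U) := (π ⁻¹' U).restrictPreimage qZ with hqVdef
  have hqVq : IsQuotientMap qV := hqZq.restrictPreimage_isOpen hπUopen
  set qP : (↥(qm ⁻¹' U) × sphereSet (n m)) → ↥U × Quot (wprojRel n χ m) :=
    Prod.map q1 qS with hqPdef
  have hqPq : IsQuotientMap qP := by
    refine IsOpenMap.isQuotientMap ?_ ?_ ?_
    · exact hq1o.prodMap (isOpenMap_quotS n χ m)
    · exact (continuous_quot_mk.restrictPreimage).prodMap continuous_quot_mk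
    · exact hq1q.surjective.prodMap fun y => Quot.exists_rep y
  -- membership facts
  have hmemVs : ∀ z : ↥(qm ⁻¹' U), ∀ j, z.1.1 j (a j) ≠ 0 := by
    intro z j
    have hz : z.1 ∈ Vs := (Set.ext_iff.mp hsat z.1).mp z.2
    exact hz j
  -- the gauge
  set tau : ↥(qm ⁻¹' U) → Fin m → Circle :=
    fun z j => unitC (z.1.1 j (a j)) (hmemVs z j) with htaudef
  set lam : ↥(qm ⁻¹' U) → Fin (n m + 1) → Circle :=
    fun z α => ∏ j : Fin m, tau z j ^ b α j with hlamdef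
  have hlamcont : ∀ α, Continuous fun z => lam z α := by
    intro α
    refine continuous_finset_prod _ fun j _ => ?_
    refine Continuous.zpow ?_ _
    refine Continuous.subtype_mk ?_ _
    have hcoord : Continuous fun z : ↥(qm ⁻¹' U) => z.1.1 j (a j) :=
      (continuous_apply (a j)).comp ((continuous_apply j).comp
        (continuous_subtype_val.comp continuous_subtype_val))
    exact hcoord.div (Complex.continuous_ofReal.comp hcoord.norm)
      fun z => by exact_mod_cast norm_ne_zero_iff.mpr (hmemVs z j)
  have hlam_equiv : ∀ (z z' : ↥(qm ⁻¹' U)) (u : Fin m → Circle),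
      torusAct n χ c u z.1.1 = z'.1.1 → ∀ α,
      lam z' α = (∏ l : Fin m, u l ^ c m α (l : ℕ)) * lam z α := by
    intro z z' u hu α
    have htau : ∀ j, tau z' j = torusScalar n χ c u j (a j) * tau z j := by
      intro j
      have hc : z'.1.1 j (a j) = (torusScalar n χ c u j (a j) : ℂ) * z.1.1 j (a j) := by
        rw [← hu]; rfl
      rw [htaudef]
      simp only
      rw [unitC_congr (hmemVs z' j) (by rw [← hc]; exact hmemVs z' j) hc,
        unitC_smul (torusScalar n χ c u j (a j)) _ (hmemVs z j)]
    calc lam z' α = ∏ j : Fin m, (torusScalar n χ c u j (a j) * tau z j) ^ b α j := by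
          rw [hlamdef]
          exact Finset.prod_congr rfl fun j _ => by rw [htau j]
      _ = (∏ j : Fin m, torusScalar n χ c u j (a j) ^ b α j)
            * ∏ j : Fin m, tau z j ^ b α j := by
          rw [← Finset.prod_mul_distrib]
          exact Finset.prod_congr rfl fun j _ => mul_zpow _ _ _
      _ = (∏ l : Fin m, u l ^ c m α (l : ℕ)) * lam z α := by
          rw [← hb α u, hlamdef]
  -- the forward map
  set pz : ↥(qZ ⁻¹' (π ⁻¹' U)) → ↥(qm ⁻¹' U) :=
    fun ζ => ⟨projZ n m ζ.1, by rw [hsat]; exact (hDeq ζ.1).mp ζ.2⟩ with hpzdef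
  have hpzcont : Continuous pz :=
    Continuous.subtype_mk ((continuous_projZ n m).comp continuous_subtype_val) _
  set wraw : ↥(qZ ⁻¹' (π ⁻¹' U)) → Fin (n m + 1) → ℂ :=
    fun ζ α => (((lam (pz ζ) α)⁻¹ : Circle) : ℂ) * ζ.1.1 (Fin.last m) α with hwrawdef
  have hwmem : ∀ ζ, wraw ζ ∈ sphereSet (n m) := by
    intro ζ
    exact sphere_mul_mem n m (fun α => (lam (pz ζ) α)⁻¹) (ζ.1.2 (Fin.last m))
  set wpart : ↥(qZ ⁻¹' (π ⁻¹' U)) → sphereSet (n m) := fun ζ => ⟨wraw ζ, hwmem ζ⟩ with hwpartdef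
  set Fraw : ↥(qZ ⁻¹' (π ⁻¹' U)) → ↥U × Quot (wprojRel n χ m) :=
    fun ζ => (q1 (pz ζ), qS (wpart ζ)) with hFrawdef
  have hFcont : Continuous Fraw := by
    refine Continuous.prodMk ((continuous_quot_mk.restrictPreimage).comp hpzcont) ?_
    refine continuous_quot_mk.comp (Continuous.subtype_mk ?_ _)
    refine continuous_pi fun α => ?_
    refine Continuous.mul ?_ ?_
    · have h1 : Continuous fun ζ : ↥(qZ ⁻¹' (π ⁻¹' U)) => (lam (pz ζ) α)⁻¹ :=
        ((hlamcont α).comp hpzcont).inv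
      exact continuous_subtype_val.comp h1
    · exact (continuous_apply α).comp ((continuous_apply (Fin.last m)).comp
        (continuous_subtype_val.comp continuous_subtype_val))
  have hFconst : ∀ ζ ζ' : ↥(qZ ⁻¹' (π ⁻¹' U)), qZ ζ.1 = qZ ζ'.1 → Fraw ζ = Fraw ζ' := by
    intro ζ ζ' he
    rw [quotZ_eq_iff] at he
    obtain ⟨Uu, hUu⟩ := he
    have hproj : torusAct n χ c (fun l => Uu l.castSucc) (pz ζ).1.1 = (pz ζ').1.1 := by
      funext j α
      show (torusScalar n χ c (fun l => Uu l.castSucc) j α : ℂ) * ζ.1.1 j.castSucc α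
        = ζ'.1.1 j.castSucc α
      rw [← torusScalar_castSucc n χ c m Uu j α]
      exact congrFun (congrFun hUu j.castSucc) α
    refine Prod.ext ?_ ?_
    · apply Subtype.ext
      show qm (pz ζ).1 = qm (pz ζ').1
      rw [quotZ_eq_iff]
      exact ⟨fun l => Uu l.castSucc, hproj⟩
    · show qS (wpart ζ) = qS (wpart ζ')
      rw [quotS_eq_iff]
      refine ⟨Uu (Fin.last m), fun α => ?_⟩
      have hE : lam (pz ζ') α
          = (∏ l : Fin m, Uu l.castSucc ^ c m α (l : ℕ)) * lam (pz ζ) α :=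
        hlam_equiv (pz ζ) (pz ζ') _ hproj α
      have hlast : ζ'.1.1 (Fin.last m) α
          = ((Uu (Fin.last m) ^ χ m α
              * ∏ l : Fin m, Uu l.castSucc ^ c m α (l : ℕ) : Circle) : ℂ)
            * ζ.1.1 (Fin.last m) α := by
        rw [← torusScalar_last n χ c m Uu α]
        exact (congrFun (congrFun hUu (Fin.last m)) α).symm
      show ((Uu (Fin.last m) ^ χ m α : Circle) : ℂ) * wraw ζ α = wraw ζ' α
      rw [hwrawdef]
      simp only
      rw [hlast, hE]
      have hn1 : ((lam (pz ζ) α : Circle) : ℂ) ≠ 0 := Circle.coe_ne_zero _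
      have hn2 : (((∏ l : Fin m, Uu l.castSucc ^ c m α (l : ℕ) : Circle)) : ℂ) ≠ 0 :=
        Circle.coe_ne_zero _
      push_cast
      field_simp
  set φf : ↥(π ⁻¹' U) → ↥U × Quot (wprojRel n χ m) :=
    Fraw ∘ Function.surjInv hqVq.surjective with hφfdef
  have hφf : ∀ ζ, φf (qV ζ) = Fraw ζ := by
    intro ζ
    apply hFconst
    exact congrArg Subtype.val (Function.surjInv_eq hqVq.surjective (qV ζ))
  have hφcont : Continuous φf := by
    rw [hqVq.continuous_iff]
    have h : φf ∘ qV = Fraw := funext hφf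
    rw [h]
    exact hFcont
  -- the backward map
  have hlamw_mem : ∀ (p : ↥(qm ⁻¹' U) × ↥(sphereSet (n m))),
      (fun α => ((lam p.1 α : Circle) : ℂ) * p.2.1 α) ∈ sphereSet (n m) :=
    fun p => sphere_mul_mem n m (lam p.1) p.2.2
  set gl : ↥(qm ⁻¹' U) × ↥(sphereSet (n m)) → ↥(Zset n (m + 1)) :=
    fun p => ⟨glue n m p.1.1 (fun α => ((lam p.1 α : Circle) : ℂ) * p.2.1 α),
      glue_mem n m p.1.1 (hlamw_mem p)⟩ with hgldef
  have hglproj : ∀ p, projZ n m (gl p) = p.1.1 := by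
    intro p
    exact glue_proj n m p.1.1 _ _
  have hglmem : ∀ p, gl p ∈ qZ ⁻¹' (π ⁻¹' U) := by
    intro p
    refine (hDeq (gl p)).mpr ?_
    rw [hglproj p]
    exact (Set.ext_iff.mp hsat p.1.1).mp p.1.2
  set Graw : ↥(qm ⁻¹' U) × ↥(sphereSet (n m)) → ↥(π ⁻¹' U) :=
    fun p => ⟨qZ (gl p), hglmem p⟩ with hGrawdef
  have hglcont : Continuous fun p : ↥(qm ⁻¹' U) × ↥(sphereSet (n m)) => (gl p).1 := by
    refine continuous_pi fun j => ?_
    refine Fin.lastCases (motive := fun j => Continuous fun p => (gl p).1 j) ?_ (fun j' => ?_) j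
    · show Continuous fun p : ↥(qm ⁻¹' U) × ↥(sphereSet (n m)) => (gl p).1 (Fin.last m)
      have h : (fun p : ↥(qm ⁻¹' U) × ↥(sphereSet (n m)) => (gl p).1 (Fin.last m))
          = fun p => (fun α => ((lam p.1 α : Circle) : ℂ) * p.2.1 α) := by
        funext p
        exact glue_last n m p.1.1 _
      rw [h]
      refine continuous_pi fun α => Continuous.mul ?_ ?_
      · have h1 : Continuous fun p : ↥(qm ⁻¹' U) × ↥(sphereSet (n m)) => lam p.1 α :=
          (hlamcont α).comp continuous_fst
        exact continuous_subtype_val.comp h1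
      · exact (continuous_apply α).comp (continuous_subtype_val.comp continuous_snd)
    · show Continuous fun p : ↥(qm ⁻¹' U) × ↥(sphereSet (n m)) => (gl p).1 j'.castSucc
      have h : (fun p : ↥(qm ⁻¹' U) × ↥(sphereSet (n m)) => (gl p).1 j'.castSucc)
          = fun p => p.1.1.1 j' := by
        funext p
        exact glue_castSucc n m p.1.1 _ j'
      rw [h]
      exact (continuous_apply j').comp
        (continuous_subtype_val.comp (continuous_subtype_val.comp continuous_fst))
  have hglc2 : Continuous gl := Continuous.subtype_mk hglcont _
  have hGrawcont : Continuous Graw :=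
    Continuous.subtype_mk (continuous_quot_mk.comp hglc2) _
  have hGconst : ∀ p p', qP p = qP p' → Graw p = Graw p' := by
    intro p p' he
    have he1 : q1 p.1 = q1 p'.1 := congrArg Prod.fst he
    have he2 : qS p.2 = qS p'.2 := congrArg Prod.snd he
    have hr1 : qm p.1.1 = qm p'.1.1 := congrArg Subtype.val he1
    rw [quotZ_eq_iff] at hr1
    obtain ⟨u, hu⟩ := hr1
    rw [quotS_eq_iff] at he2
    obtain ⟨v, hv⟩ := he2
    apply Subtype.ext
    show qZ (gl p) = qZ (gl p')
    rw [quotZ_eq_iff]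
    refine ⟨Fin.snoc u v, ?_⟩
    have hUvC : ∀ l : Fin m, (Fin.snoc u v : Fin (m+1) → Circle) l.castSucc = u l := by
      intro l; simp
    have hUvL : (Fin.snoc u v : Fin (m+1) → Circle) (Fin.last m) = v := by simp
    funext j
    refine Fin.lastCases
      (motive := fun j => torusAct n χ c (Fin.snoc u v) (gl p).1 j = (gl p').1 j) ?_
      (fun j' => ?_) j
    · funext α
      show (torusScalar n χ c (Fin.snoc u v) (Fin.last m) α : ℂ)
          * glue n m p.1.1 (fun α' => ((lam p.1 α' : Circle) : ℂ) * p.2.1 α') (Fin.last m) α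
          = glue n m p'.1.1 (fun α' => ((lam p'.1 α' : Circle) : ℂ) * p'.2.1 α') (Fin.last m) α
      rw [glue_last, glue_last, torusScalar_last]
      have hprod : (∏ l : Fin m, (Fin.snoc u v : Fin (m+1) → Circle) l.castSucc ^ c m α (l : ℕ))
          = ∏ l : Fin m, u l ^ c m α (l : ℕ) :=
        Finset.prod_congr rfl fun l _ => by rw [hUvC l]
      rw [hUvL, hprod, hlam_equiv p.1 p'.1 u hu α, ← hv α]
      push_cast
      ring
    · funext α
      show (torusScalar n χ c (Fin.snoc u v) j'.castSucc α : ℂ)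
          * glue n m p.1.1 (fun α' => ((lam p.1 α' : Circle) : ℂ) * p.2.1 α') j'.castSucc α
          = glue n m p'.1.1 (fun α' => ((lam p'.1 α' : Circle) : ℂ) * p'.2.1 α') j'.castSucc α
      rw [glue_castSucc, glue_castSucc, torusScalar_castSucc]
      have hsc : (fun l : Fin m => (Fin.snoc u v : Fin (m+1) → Circle) l.castSucc) = u := by
        funext l
        exact hUvC l
      rw [hsc]
      exact congrFun (congrFun hu j') α
  set ψf : ↥U × Quot (wprojRel n χ m) → ↥(π ⁻¹' U) :=
    Graw ∘ Function.surjInv hqPq.surjective with hψfdef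
  have hψf : ∀ p, ψf (qP p) = Graw p := by
    intro p
    apply hGconst
    exact Function.surjInv_eq hqPq.surjective (qP p)
  have hψcont : Continuous ψf := by
    rw [hqPq.continuous_iff]
    have h : ψf ∘ qP = Graw := funext hψf
    rw [h]
    exact hGrawcont
  -- the two maps are inverse
  have hFval : ∀ ζ, Fraw ζ = qP (pz ζ, wpart ζ) := fun ζ => rfl
  have hleft : ∀ q, ψf (φf q) = q := by
    intro q
    obtain ⟨ζ, rfl⟩ := hqVq.surjective q
    rw [hφf ζ, hFval ζ, hψf (pz ζ, wpart ζ)]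
    apply Subtype.ext
    show qZ (gl (pz ζ, wpart ζ)) = qZ ζ.1
    have hgl : gl (pz ζ, wpart ζ) = ζ.1 := by
      apply Subtype.ext
      funext j
      refine Fin.lastCases
        (motive := fun j => (gl (pz ζ, wpart ζ)).1 j = ζ.1.1 j) ?_ (fun j' => ?_) j
      · show (gl (pz ζ, wpart ζ)).1 (Fin.last m) = ζ.1.1 (Fin.last m)
        have h0 : (gl (pz ζ, wpart ζ)).1 (Fin.last m)
            = fun α => ((lam (pz ζ) α : Circle) : ℂ) * wraw ζ α :=
          glue_last n m (pz ζ).1 _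
        rw [h0]
        funext α
        have h1 : wraw ζ α = (((lam (pz ζ) α)⁻¹ : Circle) : ℂ) * ζ.1.1 (Fin.last m) α := rfl
        rw [h1, ← mul_assoc, ← Circle.coe_mul, mul_inv_cancel, Circle.coe_one, one_mul]
      · show (gl (pz ζ, wpart ζ)).1 j'.castSucc = ζ.1.1 j'.castSucc
        have h0 : (gl (pz ζ, wpart ζ)).1 j'.castSucc = (pz ζ).1.1 j' :=
          glue_castSucc n m (pz ζ).1 _ j'
        rw [h0]
        rfl
    rw [hgl]
  have hright : ∀ y, φf (ψf y) = y := by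
    intro y
    obtain ⟨p, rfl⟩ := hqPq.surjective y
    rw [hψf p]
    have hGq : Graw p = qV ⟨gl p, hglmem p⟩ := rfl
    rw [hGq, hφf ⟨gl p, hglmem p⟩]
    have hpz : pz ⟨gl p, hglmem p⟩ = p.1 := by
      apply Subtype.ext
      show projZ n m (gl p) = p.1.1
      exact hglproj p
    refine Prod.ext ?_ ?_
    · show q1 (pz ⟨gl p, hglmem p⟩) = q1 p.1
      rw [hpz]
    · show qS (wpart ⟨gl p, hglmem p⟩) = qS p.2
      have hw : wpart ⟨gl p, hglmem p⟩ = p.2 := by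
        apply Subtype.ext
        funext α
        show (((lam (pz ⟨gl p, hglmem p⟩) α)⁻¹ : Circle) : ℂ) * (gl p).1 (Fin.last m) α
          = p.2.1 α
        rw [hpz]
        have h0 : (gl p).1 (Fin.last m) α = ((lam p.1 α : Circle) : ℂ) * p.2.1 α :=
          congrFun (glue_last n m p.1.1 _) α
        rw [h0, ← mul_assoc, ← Circle.coe_mul, inv_mul_cancel, Circle.coe_one, one_mul]
      rw [hw]
  refine ⟨U, hUopen, fun z hz => Set.mem_image_of_mem qm hz,
    ⟨Homeomorph.mk ⟨φf, ψf, hleft, hright⟩ hφcont hψcont, ?_⟩⟩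
  intro q
  obtain ⟨ζ, rfl⟩ := hqVq.surjective q
  show ((φf (qV ζ)).1 : Xsp n χ c m) = π ((qV ζ : ↥(π ⁻¹' U)) : Xsp n χ c (m + 1))
  rw [hφf ζ]
  show qm (pz ζ).1 = π (qZ ζ.1)
  rw [hπ ζ.1]

end Triv

/-- If the order of the stabilizer of every point of `Z_{i-1}` divides every
`c^i_{α,l}`, then `π_i : X_i → X_{i-1}` is a locally trivial fiber bundle with fiber
the weighted projective space `ℂP^{n_i}_{χ^i}`: every point of `X_{i-1}` has an open
neighbourhood `U` and a homeomorphism `π_i⁻¹(U) ≅ U × ℂP^{n_i}_{χ^i}` commuting with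
the projections to `U` (here `i = m + 1`, `1 ≤ m`). -/
theorem projection_is_fiber_bundle
    (k m : ℕ) (hm : 1 ≤ m) (hmk : m + 1 ≤ k)
    (n : ℕ → ℕ) (hn : ∀ i, i < k → 1 ≤ n i)
    (χ : (i : ℕ) → Fin (n i + 1) → ℕ) (hχpos : ∀ i, i < k → ∀ α, 0 < χ i α)
    (c : (i : ℕ) → Fin (n i + 1) → ℕ → ℤ)
    (hdvd : ∀ x : Zset n m, ∀ α : Fin (n m + 1), ∀ l, l < m →
      (Nat.card {u : Fin m → Circle //
          torusAct n χ c u (x : (j : Fin m) → Fin (n j + 1) → ℂ)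
            = (x : (j : Fin m) → Fin (n j + 1) → ℂ)} : ℤ) ∣ c m α l)
    (π : Xsp n χ c (m + 1) → Xsp n χ c m)
    (hπ : ∀ z : Zset n (m + 1),
      π (Quot.mk (orbitRel n χ c (m + 1)) z) = Quot.mk (orbitRel n χ c m) (projZ n m z)) :
    ∀ p : Xsp n χ c m, ∃ U : Set (Xsp n χ c m), IsOpen U ∧ p ∈ U ∧
      ∃ φ : (π ⁻¹' U) ≃ₜ U × Quot (wprojRel n χ m),
        ∀ q : π ⁻¹' U, ((φ q).1 : Xsp n χ c m) = π (q : Xsp n χ c (m + 1)) := by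
  classical
  intro p
  obtain ⟨z, rfl⟩ := Quot.exists_rep p
  -- choose a nonvanishing coordinate in every block
  have hex : ∀ j : Fin m, ∃ α, z.1 j α ≠ 0 := by
    intro j
    by_contra h
    push_neg at h
    have h2 := z.2 j
    simp only [h, Complex.normSq_zero, Finset.sum_const_zero] at h2
    exact zero_ne_one h2
  choose a ha using hex
  set χa : ℕ → ℕ := fun j => if h : j < m then χ j (a ⟨j, h⟩) else 1 with hχadef
  set ca : ℕ → ℕ → ℤ := fun j l => if h : j < m then c j (a ⟨j, h⟩) l else 0 with hcadef
  have hχaeq : ∀ j : Fin m, χa (j : ℕ) = χ (j : ℕ) (a j) := by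
    intro j
    rw [hχadef]
    simp only
    rw [dif_pos j.isLt]
  have hcaeq : ∀ (j l : Fin m), ca (j : ℕ) (l : ℕ) = c (j : ℕ) (a j) (l : ℕ) := by
    intro j l
    rw [hcadef]
    simp only
    rw [dif_pos j.isLt]
  have hpos : ∀ j, j < m → 0 < χa j := by
    intro j hj
    rw [hχadef]
    simp only
    rw [dif_pos hj]
    exact hχpos j (by omega) _
  have hsgen : ∀ (u : Fin m → Circle) (j : Fin m),
      sGen χa ca u j = torusScalar n χ c u j (a j) := by
    intro u j
    show u j ^ χa (j : ℕ) * ∏ l : Fin m, (if (l : ℕ) < (j : ℕ) then u l ^ ca (j : ℕ) (l : ℕ) else 1)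
      = u j ^ χ (j : ℕ) (a j)
        * ∏ l : Fin m, (if (l : ℕ) < (j : ℕ) then u l ^ c (j : ℕ) (a j) (l : ℕ) else 1)
    rw [hχaeq j]
    congr 1
    refine Finset.prod_congr rfl fun l _ => ?_
    by_cases hlj : (l : ℕ) < (j : ℕ)
    · rw [if_pos hlj, if_pos hlj, hcaeq j l]
    · rw [if_neg hlj, if_neg hlj]
  -- the base point with stabilizer exactly the kernel
  have hz0mem : (fun (j : Fin m) (α : Fin (n (j : ℕ) + 1)) => if α = a j then (1 : ℂ) else 0)
      ∈ Zset n m := by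
    intro j
    simp [apply_ite Complex.normSq, Finset.sum_ite_eq']
  set z0 : Zset n m := ⟨fun j α => if α = a j then (1 : ℂ) else 0, hz0mem⟩ with hz0def
  have hstab : ∀ u : Fin m → Circle,
      (torusAct n χ c u z0.1 = z0.1) ↔ (∀ j, sGen χa ca u j = 1) := by
    intro u
    constructor
    · intro h j
      rw [hsgen]
      have h2 := congrFun (congrFun h j) (a j)
      show torusScalar n χ c u j (a j) = 1
      have h3 : (torusScalar n χ c u j (a j) : ℂ) * (if a j = a j then (1 : ℂ) else 0)
          = (if a j = a j then (1 : ℂ) else 0) := h2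
      rw [if_pos rfl, mul_one] at h3
      exact Circle.coe_eq_one.mp h3
    · intro h
      funext j α
      show (torusScalar n χ c u j α : ℂ) * (if α = a j then (1 : ℂ) else 0)
        = (if α = a j then (1 : ℂ) else 0)
      by_cases hα : α = a j
      · have h3 : torusScalar n χ c u j (a j) = 1 := by
          rw [← hsgen]
          exact h j
        rw [if_pos hα, mul_one, hα, h3, Circle.coe_one]
      · rw [if_neg hα, mul_zero]
  have hcard : ∀ (α : Fin (n m + 1)) l, l < m →
      (∏ j ∈ Finset.range m, (χa j : ℤ)) ∣ c m α l := by
    intro α l hl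
    have h1 := hdvd z0 α l hl
    have h2 : Nat.card {u : Fin m → Circle // torusAct n χ c u z0.1 = z0.1}
        = Nat.card {u : Fin m → Circle // ∀ j, sGen χa ca u j = 1} :=
      Nat.card_congr (Equiv.subtypeEquivRight hstab)
    rw [h2, card_kernel m χa ca hpos] at h1
    exact_mod_cast h1
  have hbex : ∀ α : Fin (n m + 1), ∃ bα : ℕ → ℤ, ∀ u : Fin m → Circle,
      (∏ l : Fin m, u l ^ c m α (l : ℕ))
        = ∏ j : Fin m, torusScalar n χ c u j (a j) ^ bα (j : ℕ) := by
    intro α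
    obtain ⟨bα, hbα⟩ := factor_char χa ca m (fun l => c m α l) hpos (fun l hl => hcard α l hl)
    refine ⟨bα, fun u => ?_⟩
    rw [hbα u]
    exact Finset.prod_congr rfl fun j _ => by rw [hsgen]
  choose b hbfun using hbex
  obtain ⟨U, hUopen, hUmem, φ, hφ⟩ :=
    trivialization n χ c m a (fun α j => b α (j : ℕ)) (fun α u => hbfun α u) π hπ
  exact ⟨U, hUopen, hUmem z ha, φ, hφ⟩
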